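/- For all natural numbers n and m, n^m = 2^((n·m+n+1)·m) mod (2^(n·m+n+1) − n). -/

import Mathlib

/-- Exponentiation as an arithmetic term: `n^m = 2^((nm+n+1)m) mod (2^(nm+n+1) − n)`. -/
theorem stmt_2 (n m : ℕ) :
    n ^ m = 2 ^ ((n * m + n + 1) * m) % (2 ^ (n * m + n + 1) - n) := by
  set k := n * m + n + 1 with hk
  have hn2 : n < 2 ^ n := Nat.lt_two_pow_self
  have hnm : n ^ m ≤ 2 ^ (n * m) := by
    calc n ^ m ≤ (2 ^ n) ^ m := Nat.pow_le_pow_left hn2.le m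
    _ = 2 ^ (n * m) := by rw [← pow_mul]
  have hbig : n ^ m + n < 2 ^ k := by
    have h1 : n ^ m ≤ 2 ^ (n * m + n) := hnm.trans (Nat.pow_le_pow_right (by norm_num) (Nat.le_add_right _ _))
    have h2 : n < 2 ^ (n * m + n) := hn2.trans_le (Nat.pow_le_pow_right (by norm_num) (Nat.le_add_left _ _))
    calc n ^ m + n < 2 ^ (n * m + n) + 2 ^ (n * m + n) := by omega
    _ = 2 ^ k := by rw [hk, pow_succ]; ring
  have hnlt : n < 2 ^ k - n := by
    have h2 : n < 2 ^ (n*m+n) := hn2.trans_le (Nat.pow_le_pow_right (by norm_num) (Nat.le_add_left _ _))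
    have : 2 ^ k = 2 ^ (n*m+n) * 2 := by rw [hk, pow_succ]
    omega
  have hd : 0 < 2 ^ k - n := lt_of_le_of_lt (Nat.zero_le _) hnlt
  have hqmod : 2 ^ k % (2 ^ k - n) = n := by
    calc 2 ^ k % (2 ^ k - n) = (2 ^ k - n + n) % (2 ^ k - n) := by
          rw [Nat.sub_add_cancel (by omega)]
    _ = n % (2 ^ k - n) := Nat.add_mod_left _ _
    _ = n := Nat.mod_eq_of_lt hnlt
  rw [pow_mul, Nat.pow_mod, hqmod]
  exact (Nat.mod_eq_of_lt (by omega)).symm
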